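/- Let a, b, c, d be real constants with a ≠ 1 and c ≠ 1, and suppose (x_n)_{n≥-1}, (y_n)_{n≥-1} solve the constant-coefficient system with x_n ≠ 0 and y_n ≠ 0 for all n. Then for every n ≥ 0, y_{2n-1} = y_{-1}^{1-n}·(x_{-1}·y_0/x_0)^n·∏_{s=0}^{n-1} [(a^{2s} + b·x_0·y_{-1}·(1 - a^{2s})/(1 - a)) / (c^{2s+1} + d·x_{-1}·y_0·(1 - c^{2s+1})/(1 - c))] and y_{2n} = y_0^{n+1}·(x_{-1}/(x_0·y_{-1}))^n·∏_{s=0}^{n-1} [(a^{2s+1} + b·x_0·y_{-1}·(1 - a^{2s+1})/(1 - a)) / (c^{2s+2} + d·x_{-1}·y_0·(1 - c^{2s+2})/(1 - c))], where y_{-1}^{1-n} denotes an integer power of the nonzero real y_{-1}. -/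

import Mathlib

set_option maxHeartbeats 2000000 in
theorem stmt_16 (x y : ℤ → ℝ) (a b c d : ℝ) (ha : a ≠ 1) (hc : c ≠ 1)
    (hx : ∀ n : ℤ, -1 ≤ n → x n ≠ 0) (hy : ∀ n : ℤ, -1 ≤ n → y n ≠ 0)
    (hda : ∀ n : ℕ, a + b * (x n * y ((n : ℤ) - 1)) ≠ 0)
    (hdc : ∀ n : ℕ, c + d * (x ((n : ℤ) - 1) * y n) ≠ 0)
    (hxe : ∀ n : ℕ, x ((n : ℤ) + 1) =
      x n * y ((n : ℤ) - 1) / (y n * (a + b * (x n * y ((n : ℤ) - 1)))))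
    (hye : ∀ n : ℕ, y ((n : ℤ) + 1) =
      x ((n : ℤ) - 1) * y n / (x n * (c + d * (x ((n : ℤ) - 1) * y n)))) :
    ∀ n : ℕ,
      y (2 * (n : ℤ) - 1) =
        y (-1) ^ (1 - (n : ℤ)) * (x (-1) * y 0 / x 0) ^ n *
          ∏ s ∈ Finset.range n,
            (a ^ (2 * s) + b * x 0 * y (-1) * ((1 - a ^ (2 * s)) / (1 - a))) /
            (c ^ (2 * s + 1) + d * x (-1) * y 0 * ((1 - c ^ (2 * s + 1)) / (1 - c))) ∧
      y (2 * (n : ℤ)) =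
        y 0 ^ (n + 1) * (x (-1) / (x 0 * y (-1))) ^ n *
          ∏ s ∈ Finset.range n,
            (a ^ (2 * s + 1) + b * x 0 * y (-1) * ((1 - a ^ (2 * s + 1)) / (1 - a))) /
            (c ^ (2 * s + 2) + d * x (-1) * y 0 * ((1 - c ^ (2 * s + 2)) / (1 - c))) := by
  have h1a : (1:ℝ) - a ≠ 0 := sub_ne_zero.mpr (Ne.symm ha)
  have h1c : (1:ℝ) - c ≠ 0 := sub_ne_zero.mpr (Ne.symm hc)
  have hxm : ∀ m : ℕ, x (m:ℤ) ≠ 0 := fun m => hx m (by linarith [Int.natCast_nonneg m])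
  have hym : ∀ m : ℕ, y (m:ℤ) ≠ 0 := fun m => hy m (by linarith [Int.natCast_nonneg m])
  have hym1 : ∀ m : ℕ, y ((m:ℤ) - 1) ≠ 0 := fun m => hy _ (by linarith [Int.natCast_nonneg m])
  have hxm1 : ∀ m : ℕ, x ((m:ℤ) - 1) ≠ 0 := fun m => hx _ (by linarith [Int.natCast_nonneg m])
  have hy1 : y (-1) ≠ 0 := hy (-1) le_rfl
  have hy0 : y 0 ≠ 0 := hy 0 (by norm_num)
  have hx0 : x 0 ≠ 0 := hx 0 (by norm_num)
  have hx1 : x (-1) ≠ 0 := hx (-1) le_rfl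
  -- closed form for u_m = x_m y_{m-1}
  have hA : ∀ m : ℕ, x m * y ((m:ℤ) - 1) *
      ((1 - a) * a ^ m + b * (x 0 * y (-1)) * (1 - a ^ m)) = (x 0 * y (-1)) * (1 - a) := by
    intro m
    induction m with
    | zero => norm_num
    | succ m ih =>
      have h1 : x ((m:ℤ) + 1) * y (m:ℤ) =
          x m * y ((m:ℤ) - 1) / (a + b * (x m * y ((m:ℤ) - 1))) := by
        rw [hxe m, div_mul_eq_mul_div,
          div_eq_div_iff (mul_ne_zero (hym m) (hda m)) (hda m)]
        ring
      push_cast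
      rw [show ((m:ℤ) + 1) - 1 = (m:ℤ) from by ring]
      rw [h1, div_mul_eq_mul_div, div_eq_iff (hda m)]
      linear_combination a * ih
  -- closed form for v_m = x_{m-1} y_m
  have hB : ∀ m : ℕ, x ((m:ℤ) - 1) * y m *
      ((1 - c) * c ^ m + d * (x (-1) * y 0) * (1 - c ^ m)) = (x (-1) * y 0) * (1 - c) := by
    intro m
    induction m with
    | zero => norm_num
    | succ m ih =>
      have h1 : x (m:ℤ) * y ((m:ℤ) + 1) =
          x ((m:ℤ) - 1) * y m / (c + d * (x ((m:ℤ) - 1) * y m)) := by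
        rw [hye m, ← mul_div_assoc,
          div_eq_div_iff (mul_ne_zero (hxm m) (hdc m)) (hdc m)]
        ring
      push_cast
      rw [show ((m:ℤ) + 1) - 1 = (m:ℤ) from by ring]
      rw [h1, div_mul_eq_mul_div, div_eq_iff (hdc m)]
      linear_combination c * ih
  intro n
  induction n with
  | zero =>
    constructor
    · norm_num
    · norm_num
  | succ n ihn =>
    obtain ⟨ih1, ih2⟩ := ihn
    constructor
    · -- odd case: y(2n+1)
      have hA2 := hA (2 * n)
      have hB2 := hB (2 * n + 1)
      push_cast at hA2 hB2
      rw [show (2 * (n:ℤ) + 1) - 1 = 2 * (n:ℤ) from by ring] at hB2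
      have hWc : (1 - c) * c ^ (2 * n + 1) + d * (x (-1) * y 0) * (1 - c ^ (2 * n + 1)) ≠ 0 := by
        intro h
        rw [h, mul_zero] at hB2
        exact (mul_ne_zero (mul_ne_zero hx1 hy0) h1c) hB2.symm
      have hk1 : y (2 * (n:ℤ) + 1) * ((x 0 * y (-1)) * (1 - a)) *
          ((1 - c) * c ^ (2 * n + 1) + d * (x (-1) * y 0) * (1 - c ^ (2 * n + 1))) =
          ((x (-1) * y 0) * (1 - c)) * y (2 * (n:ℤ) - 1) *
          ((1 - a) * a ^ (2 * n) + b * (x 0 * y (-1)) * (1 - a ^ (2 * n))) := by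
        linear_combination y (2 * (n:ℤ) - 1) *
            ((1 - a) * a ^ (2 * n) + b * (x 0 * y (-1)) * (1 - a ^ (2 * n))) * hB2 -
          y (2 * (n:ℤ) + 1) *
            ((1 - c) * c ^ (2 * n + 1) + d * (x (-1) * y 0) * (1 - c ^ (2 * n + 1))) * hA2
      have hy21 : y (2 * (n:ℤ) + 1) =
          ((x (-1) * y 0) * (1 - c)) * y (2 * (n:ℤ) - 1) *
            ((1 - a) * a ^ (2 * n) + b * (x 0 * y (-1)) * (1 - a ^ (2 * n))) /
          (((x 0 * y (-1)) * (1 - a)) *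
            ((1 - c) * c ^ (2 * n + 1) + d * (x (-1) * y 0) * (1 - c ^ (2 * n + 1)))) := by
        rw [eq_div_iff (mul_ne_zero (mul_ne_zero (mul_ne_zero hx0 hy1) h1a) hWc)]
        linear_combination hk1
      have hta : a ^ (2 * n) + b * x 0 * y (-1) * ((1 - a ^ (2 * n)) / (1 - a)) =
          ((1 - a) * a ^ (2 * n) + b * (x 0 * y (-1)) * (1 - a ^ (2 * n))) / (1 - a) := by
        field_simp
      have htc : c ^ (2 * n + 1) + d * x (-1) * y 0 * ((1 - c ^ (2 * n + 1)) / (1 - c)) =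
          ((1 - c) * c ^ (2 * n + 1) + d * (x (-1) * y 0) * (1 - c ^ (2 * n + 1))) / (1 - c) := by
        field_simp
      push_cast
      rw [show 2 * ((n:ℤ) + 1) - 1 = 2 * (n:ℤ) + 1 from by ring]
      rw [Finset.prod_range_succ, pow_succ]
      rw [show (1:ℤ) - ((n:ℤ) + 1) = (1 - (n:ℤ)) - 1 from by ring, zpow_sub_one₀ hy1]
      rw [hta, htc, hy21, ih1]
      field_simp
      ring
    · -- even case: y(2n+2)
      have hA2 := hA (2 * n + 1)
      have hB2 := hB (2 * n + 2)
      push_cast at hA2 hB2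
      rw [show (2 * (n:ℤ) + 1) - 1 = 2 * (n:ℤ) from by ring] at hA2
      rw [show (2 * (n:ℤ) + 2) - 1 = 2 * (n:ℤ) + 1 from by ring] at hB2
      have hWc : (1 - c) * c ^ (2 * n + 2) + d * (x (-1) * y 0) * (1 - c ^ (2 * n + 2)) ≠ 0 := by
        intro h
        rw [h, mul_zero] at hB2
        exact (mul_ne_zero (mul_ne_zero hx1 hy0) h1c) hB2.symm
      have hk1 : y (2 * (n:ℤ) + 2) * ((x 0 * y (-1)) * (1 - a)) *
          ((1 - c) * c ^ (2 * n + 2) + d * (x (-1) * y 0) * (1 - c ^ (2 * n + 2))) =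
          ((x (-1) * y 0) * (1 - c)) * y (2 * (n:ℤ)) *
          ((1 - a) * a ^ (2 * n + 1) + b * (x 0 * y (-1)) * (1 - a ^ (2 * n + 1))) := by
        linear_combination y (2 * (n:ℤ)) *
            ((1 - a) * a ^ (2 * n + 1) + b * (x 0 * y (-1)) * (1 - a ^ (2 * n + 1))) * hB2 -
          y (2 * (n:ℤ) + 2) *
            ((1 - c) * c ^ (2 * n + 2) + d * (x (-1) * y 0) * (1 - c ^ (2 * n + 2))) * hA2
      have hy22 : y (2 * (n:ℤ) + 2) =
          ((x (-1) * y 0) * (1 - c)) * y (2 * (n:ℤ)) *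
            ((1 - a) * a ^ (2 * n + 1) + b * (x 0 * y (-1)) * (1 - a ^ (2 * n + 1))) /
          (((x 0 * y (-1)) * (1 - a)) *
            ((1 - c) * c ^ (2 * n + 2) + d * (x (-1) * y 0) * (1 - c ^ (2 * n + 2)))) := by
        rw [eq_div_iff (mul_ne_zero (mul_ne_zero (mul_ne_zero hx0 hy1) h1a) hWc)]
        linear_combination hk1
      have hta : a ^ (2 * n + 1) + b * x 0 * y (-1) * ((1 - a ^ (2 * n + 1)) / (1 - a)) =
          ((1 - a) * a ^ (2 * n + 1) + b * (x 0 * y (-1)) * (1 - a ^ (2 * n + 1))) / (1 - a) := by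
        field_simp
      have htc : c ^ (2 * n + 2) + d * x (-1) * y 0 * ((1 - c ^ (2 * n + 2)) / (1 - c)) =
          ((1 - c) * c ^ (2 * n + 2) + d * (x (-1) * y 0) * (1 - c ^ (2 * n + 2))) / (1 - c) := by
        field_simp
      push_cast
      rw [show 2 * ((n:ℤ) + 1) = 2 * (n:ℤ) + 2 from by ring]
      rw [Finset.prod_range_succ, pow_succ, pow_succ (y 0)]
      rw [hta, htc, hy22, ih2]
      generalize (∏ s ∈ Finset.range n, ((a ^ (2 * s + 1) + b * x 0 * y (-1) * ((1 - a ^ (2 * s + 1)) / (1 - a))) / (c ^ (2 * s + 2) + d * x (-1) * y 0 * ((1 - c ^ (2 * s + 2)) / (1 - c))))) = P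
      generalize (1 - c) * c ^ (2 * n + 2) + d * (x (-1) * y 0) * (1 - c ^ (2 * n + 2)) = W at hWc ⊢
      rw [div_pow, div_pow]
      field_simp
      ring
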